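/- Let m, n, μ be positive integers satisfying 2m + n = (4^μ − 1)/3 and 9m ≤ 4^μ − 5·2^{μ−1} + 1 if μ is odd, respectively 9m ≤ 4^μ − 2^{μ+1} + 1 if μ is even. Then there exists a 1-perfect code in the Doob graph D(m,n). -/

import Mathlib

open SimpleGraph

/-- The box (Cartesian) product of an indexed family of simple graphs. -/
def boxPi {ι : Type*} {V : ι → Type*} (G : ∀ i, SimpleGraph (V i)) :
    SimpleGraph (∀ i, V i) where
  Adj x y := ∃ i, (G i).Adj (x i) (y i) ∧ ∀ j, j ≠ i → x j = y j
  symm := by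
    refine ⟨?_⟩
    rintro x y ⟨i, h, he⟩
    exact ⟨i, (G i).adj_symm h, fun j hj => (he j hj).symm⟩
  loopless := by
    refine ⟨?_⟩
    rintro x ⟨i, h, -⟩
    exact (G i).irrefl h

/-- The Shrikhande graph on `(ZMod 4) × (ZMod 4)`. -/
def Shri : SimpleGraph (ZMod 4 × ZMod 4) where
  Adj a b := a - b ∈
    ({(0, 1), (1, 0), (1, 1), (0, 3), (3, 0), (3, 3)} : Finset (ZMod 4 × ZMod 4))
  symm := by
    have h : ∀ a b : ZMod 4 × ZMod 4,
        a - b ∈ ({(0, 1), (1, 0), (1, 1), (0, 3), (3, 0), (3, 3)} :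
          Finset (ZMod 4 × ZMod 4)) →
        b - a ∈ ({(0, 1), (1, 0), (1, 1), (0, 3), (3, 0), (3, 3)} :
          Finset (ZMod 4 × ZMod 4)) := by decide
    exact ⟨fun a b hab => h a b hab⟩
  loopless := by
    refine ⟨?_⟩
    intro a h
    rw [sub_self] at h
    revert h
    decide

/-- `C` is a 1-perfect code in `G`: every vertex is at graph distance at most 1
(i.e., equal or adjacent) from exactly one element of `C`. -/
def IsPerfectCode {V : Type*} (G : SimpleGraph V) (C : Set V) : Prop :=
  ∀ v : V, ∃! c : V, c ∈ C ∧ (v = c ∨ G.Adj v c)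

/-- The vertex set `ℤ₄^{2m} × ℤ₂^{2n}`. -/
abbrev DoobVtx2 (m n : ℕ) : Type :=
  (Fin m → ZMod 4 × ZMod 4) × (Fin n → ZMod 2 × ZMod 2)

/-- The Doob graph `D(m, n)` on `ℤ₄^{2m} × ℤ₂^{2n}`. -/
def DoobGraphZ2 (m n : ℕ) : SimpleGraph (DoobVtx2 m n) :=
  (boxPi fun _ : Fin m => Shri) □
    (boxPi fun _ : Fin n => (⊤ : SimpleGraph (ZMod 2 × ZMod 2)))


namespace PCaux

/-! ### GF(4) as ZMod 2 × ZMod 2 -/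

abbrev F2 := ZMod 2 × ZMod 2

/-- multiplication of GF(4) on `ZMod 2 × ZMod 2` -/
def fmul (x y : F2) : F2 :=
  (x.1 * y.1 + x.2 * y.2, x.1 * y.2 + x.2 * y.1 + x.2 * y.2)

lemma f2_add_self : ∀ c : F2, c + c = 0 := by decide
lemma f2_neg : ∀ c : F2, -c = c := by decide
lemma fmul_sub_left : ∀ c d e : F2, fmul (c - d) e = fmul c e - fmul d e := by decide
lemma fmul_ne_zero : ∀ c d : F2, c ≠ 0 ∧ d ≠ 0 → fmul c d ≠ 0 := by decide
lemma fmul_cancel : ∀ c d d' : F2, c ≠ 0 ∧ fmul c d = fmul c d' → d = d' := by decide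
lemma fmul_cancel' : ∀ c c' d : F2, d ≠ 0 ∧ fmul c d = fmul c' d → c = c' := by decide
lemma f2_solve : ∀ c e : F2, c ≠ 0 → ∃ k, fmul c k = e := by decide
lemma f2_ne_zero_of_fmul : ∀ c k : F2, fmul c k ≠ 0 → k ≠ 0 := by decide
lemma f2_exists_inv : ∀ c : F2, c ≠ 0 → ∃ d, d ≠ 0 ∧ ∀ v : F2, fmul d (fmul c v) = v := by decide
lemma f2_one_smul : ∀ v : F2, fmul (1, 0) v = v := by decide
lemma fmul_assoc : ∀ c d e : F2, fmul c (fmul d e) = fmul (fmul c d) e := by decide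

/-! ### vectors over GF(4) and scalar multiplication -/

def smul {k : ℕ} (c : F2) (v : Fin k → F2) : Fin k → F2 := fun i => fmul c (v i)

lemma smul_sub {k : ℕ} (c d : F2) (v : Fin k → F2) :
    smul (c - d) v = smul c v - smul d v := by
  funext i; exact fmul_sub_left c d (v i)

lemma smul_ne_zero {k : ℕ} {c : F2} {v : Fin k → F2} (hc : c ≠ 0) (hv : v ≠ 0) :
    smul c v ≠ 0 := by
  obtain ⟨i, hi⟩ := Function.ne_iff.mp hv
  exact Function.ne_iff.mpr ⟨i, fmul_ne_zero c (v i) ⟨hc, hi⟩⟩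

lemma smul_cancel_scalar {k : ℕ} {c c' : F2} {v : Fin k → F2} (hv : v ≠ 0)
    (h : smul c v = smul c' v) : c = c' := by
  obtain ⟨i, hi⟩ := Function.ne_iff.mp hv
  exact fmul_cancel' c c' (v i) ⟨hi, congrFun h i⟩

/-! ### projective points -/

def pRel {k : ℕ} (v w : {x : Fin k → F2 // x ≠ 0}) : Prop :=
  ∃ c : F2, c ≠ 0 ∧ smul c v.1 = w.1

instance pSetoid (k : ℕ) : Setoid {x : Fin k → F2 // x ≠ 0} where
  r := pRel
  iseqv := by
    constructor
    · intro v; exact ⟨(1, 0), by decide, funext fun i => f2_one_smul (v.1 i)⟩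
    · rintro v w ⟨c, hc, h⟩
      obtain ⟨d, hd, hdi⟩ := f2_exists_inv c hc
      exact ⟨d, hd, by rw [← h]; funext i; exact hdi (v.1 i)⟩
    · rintro u v w ⟨c, hc, h⟩ ⟨d, hd, h'⟩
      refine ⟨fmul d c, fmul_ne_zero d c ⟨hd, hc⟩, ?_⟩
      rw [← h', ← h]; funext i; exact (fmul_assoc d c (u.1 i)).symm

instance pRelDec {k : ℕ} (v w : {x : Fin k → F2 // x ≠ 0}) : Decidable (v ≈ w) := by
  change Decidable (∃ c : F2, c ≠ 0 ∧ smul c v.1 = w.1); infer_instance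

def ProjPt (k : ℕ) := Quotient (pSetoid k)

instance (k : ℕ) : Fintype (ProjPt k) := Quotient.fintype _
instance (k : ℕ) : DecidableEq (ProjPt k) := Quotient.decidableEq

noncomputable def rep {k : ℕ} (p : ProjPt k) : Fin k → F2 := p.out.1

lemma rep_ne_zero {k : ℕ} (p : ProjPt k) : rep p ≠ 0 := p.out.2

lemma smul_rep_ne_zero {k : ℕ} {c : F2} (hc : c ≠ 0) (p : ProjPt k) :
    smul c (rep p) ≠ 0 := smul_ne_zero hc (rep_ne_zero p)

lemma line_exists {k : ℕ} (s : Fin k → F2) (hs : s ≠ 0) :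
    ∃ (p : ProjPt k) (c : F2), c ≠ 0 ∧ smul c (rep p) = s := by
  refine ⟨Quotient.mk _ ⟨s, hs⟩, ?_⟩
  have h : pRel (Quotient.mk _ ⟨s, hs⟩ : ProjPt k).out ⟨s, hs⟩ := by
    have := Quotient.mk_out (s := pSetoid k) (⟨s, hs⟩ : {x : Fin k → F2 // x ≠ 0})
    exact this
  obtain ⟨c, hc, hcs⟩ := h
  exact ⟨c, hc, hcs⟩

lemma line_unique {k : ℕ} {p p' : ProjPt k} {c c' : F2} (hc : c ≠ 0) (hc' : c' ≠ 0)
    (h : smul c (rep p) = smul c' (rep p')) : p = p' ∧ c = c' := by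
  have hpp : p = p' := by
    obtain ⟨d, hd, hdi⟩ := f2_exists_inv c' hc'
    have : pRel p.out p'.out := by
      refine ⟨fmul d c, fmul_ne_zero d c ⟨hd, hc⟩, ?_⟩
      show smul (fmul d c) (rep p) = rep p'
      have h1 : smul d (smul c (rep p)) = smul d (smul c' (rep p')) := by rw [h]
      have h2 : smul d (smul c' (rep p')) = rep p' := funext fun i => hdi (rep p' i)
      rw [h2] at h1
      rw [← h1]; funext i; exact (fmul_assoc d c (rep p i)).symm
    exact ((Quotient.out_eq p).symm.trans
      ((Quotient.sound (s := pSetoid k) this).trans (Quotient.out_eq p')))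
  subst hpp
  exact ⟨rfl, smul_cancel_scalar (rep_ne_zero p) h⟩

lemma card_projPt (k : ℕ) : 3 * Fintype.card (ProjPt k) + 1 = 4 ^ k := by
  classical
  have e : ProjPt k × {c : F2 // c ≠ 0} ≃ {x : Fin k → F2 // x ≠ 0} := by
    refine Equiv.ofBijective (fun pc => ⟨smul pc.2.1 (rep pc.1), smul_rep_ne_zero pc.2.2 pc.1⟩) ⟨?_, ?_⟩
    · rintro ⟨p, c, hc⟩ ⟨p', c', hc'⟩ hh
      have := line_unique hc hc' (congrArg Subtype.val hh)
      simp only [Prod.mk.injEq, Subtype.mk.injEq]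
      exact ⟨this.1, this.2⟩
    · rintro ⟨s, hs⟩
      obtain ⟨p, c, hc, hcs⟩ := line_exists s hs
      exact ⟨⟨p, c, hc⟩, Subtype.ext hcs⟩
  have h1 := Fintype.card_congr e
  rw [Fintype.card_prod] at h1
  have h2 : Fintype.card {c : F2 // c ≠ 0} = 3 := by decide
  rw [h2] at h1
  have h3 : Fintype.card {x : Fin k → F2 // x ≠ 0} + 1 = 4 ^ k := by
    classical
    have hc4 : Fintype.card (Fin k → F2) = 4 ^ k := by
      rw [Fintype.card_fun]; norm_num
    have hcompl : Fintype.card {x : Fin k → F2 // x ≠ 0}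
        = Fintype.card (Fin k → F2) - Fintype.card {x : Fin k → F2 // x = 0} :=
      Fintype.card_subtype_compl _
    have h0 : Fintype.card {x : Fin k → F2 // x = 0} = 1 := Fintype.card_subtype_eq 0
    have hle : 1 ≤ Fintype.card (Fin k → F2) := by
      rw [hc4]; exact Nat.one_le_pow _ _ (by norm_num)
    omega
  omega

/-! ### the local gadget on (Shrikhande × K4) -/

def SShF : Finset (ZMod 4 × ZMod 4) :=
  {(0, 1), (1, 0), (1, 1), (0, 3), (3, 0), (3, 3)}

abbrev Lcl := (ZMod 4 × ZMod 4) × F2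

def localAdj (u w : Lcl) : Prop :=
  (w.2 = u.2 ∧ w.1 - u.1 ∈ SShF) ∨ (w.1 = u.1 ∧ w.2 ≠ u.2)

instance (u w : Lcl) : Decidable (localAdj u w) := by
  unfold localAdj; infer_instance

def piTab : ℕ :=
  24330027216349400542655014933496993704424177624281690485642147649254352187280

def decF (v : ℕ) : F2 := (((v / 2 : ℕ) : ZMod 2), ((v : ℕ) : ZMod 2))

def piLoc (u : Lcl) : F2 × F2 :=
  let idx := u.1.1.val * 16 + u.1.2.val * 4 + (u.2.1.val * 2 + u.2.2.val)
  let v := (piTab >>> (4 * idx)) % 16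
  (decF (v / 4), decF v)

def piDiff (u w : Lcl) : F2 × F2 := (piLoc w - piLoc u : F2 × F2)

def D9 : Finset (F2 × F2) := Finset.univ.filter (fun d => d.1 ≠ 0 ∧ d.2 ≠ 0)

def nbhd (u : Lcl) : Finset Lcl := Finset.univ.filter (fun w => localAdj u w)

set_option maxRecDepth 100000 in
set_option maxHeartbeats 1000000 in
theorem piKey : ∀ u : Lcl, (nbhd u).image (piDiff u) = D9 ∧ (nbhd u).card = 9 := by
  decide

lemma card_D9 : D9.card = 9 := by decide

lemma piDiff_mem {u w : Lcl} (h : localAdj u w) :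
    (piDiff u w).1 ≠ 0 ∧ (piDiff u w).2 ≠ 0 := by
  have himg := (piKey u).1
  have hw : w ∈ nbhd u := by simp [nbhd, h]
  have : piDiff u w ∈ D9 := by
    rw [← himg]; exact Finset.mem_image_of_mem _ hw
  simpa [D9] using this

lemma piInjOn (u : Lcl) : Set.InjOn (piDiff u) (nbhd u) := by
  apply Finset.injOn_of_card_image_eq
  rw [(piKey u).1, (piKey u).2, card_D9]

lemma pi_exists_unique (u : Lcl) (d : F2 × F2) (h1 : d.1 ≠ 0) (h2 : d.2 ≠ 0) :
    ∃! w : Lcl, localAdj u w ∧ piDiff u w = d := by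
  have hd : d ∈ D9 := by simp [D9, h1, h2]
  rw [← (piKey u).1] at hd
  obtain ⟨w, hw, hwd⟩ := Finset.mem_image.mp hd
  refine ⟨w, ⟨by simpa [nbhd] using hw, hwd⟩, ?_⟩
  rintro w' ⟨hw', hwd'⟩
  exact piInjOn u (by simp [nbhd, hw']) (by simpa [nbhd] using hw) (hwd'.trans hwd.symm)

lemma localAdj_not_both {u w : Lcl} (h : localAdj u w) :
    ¬(w.1 = u.1 ∧ w.2 = u.2) := by
  rintro ⟨h1, h2⟩
  rcases h with ⟨-, hmem⟩ | ⟨-, hne⟩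
  · rw [h1, sub_self] at hmem; revert hmem; decide
  · exact hne h2

lemma sshF_symm : ∀ x : ZMod 4 × ZMod 4, x ∈ SShF → -x ∈ SShF := by decide

lemma sub_mem_sshF_comm {x y : ZMod 4 × ZMod 4} (h : x - y ∈ SShF) : y - x ∈ SShF := by
  have := sshF_symm _ h; simpa using this

/-! ### the code construction -/

abbrev SynA (a b : ℕ) := (Fin a → F2) × (Fin b → F2)

lemma synA_add_self {a b : ℕ} (x : SynA a b) : x + x = 0 := by
  have h1 : (x + x).1 = ((0 : SynA a b)).1 := funext fun i => f2_add_self (x.1 i)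
  have h2 : (x + x).2 = ((0 : SynA a b)).2 := funext fun i => f2_add_self (x.2 i)
  exact Prod.ext_iff.mpr ⟨h1, h2⟩

abbrev Vtx (m n : ℕ) := (Fin m → ZMod 4 × ZMod 4) × (Fin n → F2)

section Construction

variable {a b m n : ℕ} (cell : Fin m → ProjPt a × ProjPt b)

/-- the grid cells not used by Shrikhande coordinates -/
def gridFree : Finset (ProjPt a × ProjPt b) := (Finset.image cell Finset.univ)ᶜ

/-- index type for the `K4` coordinates -/
abbrev KnT : Type :=
  (ProjPt a ⊕ ProjPt b) ⊕
    (({c : ProjPt a × ProjPt b // c ∈ gridFree cell} × {k : F2 // k ≠ 0}) ⊕ Fin m)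

variable (eK : KnT cell ≃ Fin n)

noncomputable def contrib (v : Vtx m n) : KnT cell → SynA a b
  | .inl (.inl p) => (smul (v.2 (eK (.inl (.inl p)))) (rep p), 0)
  | .inl (.inr q) => (0, smul (v.2 (eK (.inl (.inr q)))) (rep q))
  | .inr (.inl ck) => (smul (v.2 (eK (.inr (.inl ck)))) (rep ck.1.1.1),
      smul (fmul (v.2 (eK (.inr (.inl ck)))) ck.2.1) (rep ck.1.1.2))
  | .inr (.inr i) =>
      (smul (piLoc (v.1 i, v.2 (eK (.inr (.inr i))))).1 (rep (cell i).1),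
       smul (piLoc (v.1 i, v.2 (eK (.inr (.inr i))))).2 (rep (cell i).2))

noncomputable def syn (v : Vtx m n) : SynA a b := ∑ κ : KnT cell, contrib cell eK v κ

/-- move changing one `K4` coordinate -/
def mvK (v : Vtx m n) (κ : KnT cell) (z : F2) : Vtx m n :=
  (v.1, Function.update v.2 (eK κ) z)

/-- move changing one Shrikhande coordinate -/
def mvS (v : Vtx m n) (i : Fin m) (s' : ZMod 4 × ZMod 4) : Vtx m n :=
  (Function.update v.1 i s', v.2)

lemma sum_pair_diff {ι A : Type*} [Fintype ι] [DecidableEq ι] [AddCommGroup A]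
    (f g : ι → A) (κ0 : ι) (h : ∀ κ, κ ≠ κ0 → f κ = g κ) :
    ∑ κ, f κ = (∑ κ, g κ) + (f κ0 - g κ0) := by
  rw [← Finset.add_sum_erase Finset.univ f (Finset.mem_univ κ0),
      ← Finset.add_sum_erase Finset.univ g (Finset.mem_univ κ0)]
  rw [Finset.sum_congr rfl (fun κ hκ => h κ (Finset.ne_of_mem_erase hκ))]
  abel

lemma contrib_mvK_other (v : Vtx m n) (κ0 : KnT cell) (z : F2) :
    ∀ κ, κ ≠ κ0 → contrib cell eK (mvK cell eK v κ0 z) κ = contrib cell eK v κ := by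
  intro κ hκ
  have hne : eK κ ≠ eK κ0 := fun h => hκ (eK.injective h)
  rcases κ with (p | q) | (ck | i) <;>
    simp only [contrib, mvK, Function.update_of_ne hne]

lemma contrib_mvS_other (v : Vtx m n) (i : Fin m) (s' : ZMod 4 × ZMod 4) :
    ∀ κ, κ ≠ .inr (.inr i) →
      contrib cell eK (mvS v i s') κ = contrib cell eK v κ := by
  intro κ hκ
  rcases κ with (p | q) | (ck | i') <;> simp only [contrib, mvS]
  have hne : i' ≠ i := fun h => hκ (by rw [h])
  rw [Function.update_of_ne hne]

lemma syn_mvK (v : Vtx m n) (κ0 : KnT cell) (z : F2) :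
    syn cell eK (mvK cell eK v κ0 z) = syn cell eK v +
      (contrib cell eK (mvK cell eK v κ0 z) κ0 - contrib cell eK v κ0) :=
  by classical exact sum_pair_diff _ _ κ0 (contrib_mvK_other cell eK v κ0 z)

lemma syn_mvS (v : Vtx m n) (i : Fin m) (s' : ZMod 4 × ZMod 4) :
    syn cell eK (mvS v i s') = syn cell eK v +
      (contrib cell eK (mvS v i s') (.inr (.inr i)) - contrib cell eK v (.inr (.inr i))) :=
  by classical exact sum_pair_diff _ _ _ (contrib_mvS_other cell eK v i s')

lemma mvK_self (v : Vtx m n) (κ0 : KnT cell) (z : F2) :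
    (mvK cell eK v κ0 z).2 (eK κ0) = z := by
  simp [mvK]

/-- contribution difference for a row move -/
lemma diff_row (v : Vtx m n) (p : ProjPt a) (z : F2) :
    contrib cell eK (mvK cell eK v (.inl (.inl p)) z) (.inl (.inl p)) -
      contrib cell eK v (.inl (.inl p)) =
    (smul (z - v.2 (eK (.inl (.inl p)))) (rep p), 0) := by
  simp only [contrib, mvK, Function.update_self]
  rw [Prod.mk_sub_mk, smul_sub]
  simp

lemma diff_col (v : Vtx m n) (q : ProjPt b) (z : F2) :
    contrib cell eK (mvK cell eK v (.inl (.inr q)) z) (.inl (.inr q)) -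
      contrib cell eK v (.inl (.inr q)) =
    (0, smul (z - v.2 (eK (.inl (.inr q)))) (rep q)) := by
  simp only [contrib, mvK, Function.update_self]
  rw [Prod.mk_sub_mk, smul_sub]
  simp

lemma diff_grid (v : Vtx m n)
    (ck : {c : ProjPt a × ProjPt b // c ∈ gridFree cell} × {k : F2 // k ≠ 0}) (z : F2) :
    contrib cell eK (mvK cell eK v (.inr (.inl ck)) z) (.inr (.inl ck)) -
      contrib cell eK v (.inr (.inl ck)) =
    (smul (z - v.2 (eK (.inr (.inl ck)))) (rep ck.1.1.1),
     smul (fmul (z - v.2 (eK (.inr (.inl ck)))) ck.2.1) (rep ck.1.1.2)) := by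
  simp only [contrib, mvK, Function.update_self]
  rw [Prod.mk_sub_mk, ← smul_sub, ← smul_sub, ← fmul_sub_left]

lemma diff_comp (v : Vtx m n) (i : Fin m) (z : F2) :
    contrib cell eK (mvK cell eK v (.inr (.inr i)) z) (.inr (.inr i)) -
      contrib cell eK v (.inr (.inr i)) =
    (smul (piDiff (v.1 i, v.2 (eK (.inr (.inr i)))) (v.1 i, z)).1 (rep (cell i).1),
     smul (piDiff (v.1 i, v.2 (eK (.inr (.inr i)))) (v.1 i, z)).2 (rep (cell i).2)) := by
  simp only [contrib, mvK, Function.update_self, piDiff]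
  rw [Prod.mk_sub_mk, ← smul_sub, ← smul_sub]
  rfl

lemma diff_sh (v : Vtx m n) (i : Fin m) (s' : ZMod 4 × ZMod 4) :
    contrib cell eK (mvS v i s') (.inr (.inr i)) -
      contrib cell eK v (.inr (.inr i)) =
    (smul (piDiff (v.1 i, v.2 (eK (.inr (.inr i)))) (s', v.2 (eK (.inr (.inr i))))).1
        (rep (cell i).1),
     smul (piDiff (v.1 i, v.2 (eK (.inr (.inr i)))) (s', v.2 (eK (.inr (.inr i))))).2
        (rep (cell i).2)) := by
  simp only [contrib, mvS, Function.update_self, piDiff]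
  rw [Prod.mk_sub_mk, ← smul_sub, ← smul_sub]
  rfl

end Construction

/-! ### adjacency characterization -/

lemma zero_not_mem_sshF : (0 : ZMod 4 × ZMod 4) ∉ SShF := by decide

lemma shri_adj_iff (x y : ZMod 4 × ZMod 4) : Shri.Adj x y ↔ x - y ∈ SShF :=
  Iff.rfl

lemma doob_adj_iff {m n : ℕ} (v w : Vtx m n) :
    (DoobGraphZ2 m n).Adj v w ↔
      (∃ i s', s' - v.1 i ∈ SShF ∧ w = (Function.update v.1 i s', v.2)) ∨
      (∃ j z, z ≠ v.2 j ∧ w = (v.1, Function.update v.2 j z)) := by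
  rw [DoobGraphZ2, SimpleGraph.boxProd_adj]
  constructor
  · rintro (⟨⟨i, hadj, hother⟩, h2⟩ | ⟨⟨j, hadj, hother⟩, h1⟩)
    · have hupd : w.1 = Function.update v.1 i (w.1 i) := by
        funext j
        by_cases hj : j = i
        · subst hj; rw [Function.update_self]
        · rw [Function.update_of_ne hj]; exact (hother j hj).symm
      exact Or.inl ⟨i, w.1 i, sub_mem_sshF_comm ((shri_adj_iff _ _).mp hadj),
        Prod.ext_iff.mpr ⟨hupd, h2.symm⟩⟩
    · have hupd : w.2 = Function.update v.2 j (w.2 j) := by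
        funext j'
        by_cases hj : j' = j
        · subst hj; rw [Function.update_self]
        · rw [Function.update_of_ne hj]; exact (hother j' hj).symm
      refine Or.inr ⟨j, w.2 j, ?_, Prod.ext_iff.mpr ⟨h1.symm, hupd⟩⟩
      exact fun h => ((SimpleGraph.top_adj _ _).mp hadj) h.symm
  · rintro (⟨i, s', hmem, rfl⟩ | ⟨j, z, hne, rfl⟩)
    · refine Or.inl ⟨⟨i, ?_, fun j hj => (Function.update_of_ne hj _ _).symm⟩, rfl⟩
      show Shri.Adj (v.1 i) (Function.update v.1 i s' i)
      rw [shri_adj_iff, Function.update_self]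
      exact sub_mem_sshF_comm hmem
    · refine Or.inr ⟨⟨j, ?_, fun j' hj => (Function.update_of_ne hj _ _).symm⟩, rfl⟩
      show (⊤ : SimpleGraph F2).Adj (v.2 j) (Function.update v.2 j z j)
      rw [SimpleGraph.top_adj, Function.update_self]
      exact fun h => hne h.symm


/-! ### the main perfect-code lemma -/

lemma synA_neg {a b : ℕ} (x : SynA a b) : -x = x :=
  neg_eq_of_add_eq_zero_left (synA_add_self x)

lemma cancel2 {a b : ℕ} {s D : SynA a b} (h1 : D.1 = s.1) (h2 : D.2 = s.2) :
    s + D = 0 := by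
  have hDs : D = s := Prod.ext_iff.mpr ⟨h1, h2⟩
  rw [hDs]; exact synA_add_self s

lemma f2_add_ne_self : ∀ t c : F2, c ≠ 0 → t + c ≠ t := by decide

section Main

variable {a b m n : ℕ} (cell : Fin m → ProjPt a × ProjPt b) (eK : KnT cell ≃ Fin n)

lemma shift_eq {v w : Vtx m n} {D : SynA a b} (hw0 : syn cell eK w = 0)
    (heq : syn cell eK w = syn cell eK v + D) : D = syn cell eK v := by
  rw [hw0] at heq
  have h2 : D = -(syn cell eK v) := eq_neg_of_add_eq_zero_right heq.symm
  rw [h2, synA_neg]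

lemma doob_adj_iff' (v w : Vtx m n) :
    (DoobGraphZ2 m n).Adj v w ↔
      (∃ i s', s' - v.1 i ∈ SShF ∧ w = mvS v i s') ∨
      (∃ (κ : KnT cell), ∃ z, z ≠ v.2 (eK κ) ∧ w = mvK cell eK v κ z) := by
  rw [doob_adj_iff]
  constructor
  · rintro (⟨i, s', h, rfl⟩ | ⟨j, z, hz, rfl⟩)
    · exact Or.inl ⟨i, s', h, rfl⟩
    · refine Or.inr ⟨eK.symm j, z, ?_, ?_⟩
      · rw [Equiv.apply_symm_apply]; exact hz
      · rw [mvK, Equiv.apply_symm_apply]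
  · rintro (⟨i, s', h, rfl⟩ | ⟨κ, z, hz, rfl⟩)
    · exact Or.inl ⟨i, s', h, rfl⟩
    · exact Or.inr ⟨eK κ, z, hz, rfl⟩

theorem main_code (hcell : Function.Injective cell) (v : Vtx m n) :
    ∃! w : Vtx m n, syn cell eK w = 0 ∧ (v = w ∨ (DoobGraphZ2 m n).Adj v w) := by
  by_cases hs : syn cell eK v = 0
  · -- the vertex itself is the unique codeword
    refine ⟨v, ⟨hs, Or.inl rfl⟩, ?_⟩
    rintro w ⟨hw0, hball⟩
    rcases hball with rfl | hadj
    · rfl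
    exfalso
    rcases (doob_adj_iff' cell eK v w).mp hadj with ⟨i, s', hmem, rfl⟩ | ⟨κ, z, hz, rfl⟩
    · -- Shrikhande move from a codeword
      have hla : localAdj (v.1 i, v.2 (eK (.inr (.inr i)))) (s', v.2 (eK (.inr (.inr i)))) :=
        Or.inl ⟨rfl, hmem⟩
      have hd := piDiff_mem hla
      have heq := syn_mvS cell eK v i s'
      rw [diff_sh] at heq
      have hD := shift_eq cell eK hw0 heq
      rw [hs] at hD
      exact smul_rep_ne_zero hd.1 (cell i).1 (congrArg Prod.fst hD)
    · rcases κ with (p | q) | (ck | i)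
      · have heq := syn_mvK cell eK v (.inl (.inl p)) z
        rw [diff_row] at heq
        have hD := shift_eq cell eK hw0 heq
        rw [hs] at hD
        exact smul_rep_ne_zero (sub_ne_zero.mpr hz) p (congrArg Prod.fst hD)
      · have heq := syn_mvK cell eK v (.inl (.inr q)) z
        rw [diff_col] at heq
        have hD := shift_eq cell eK hw0 heq
        rw [hs] at hD
        exact smul_rep_ne_zero (sub_ne_zero.mpr hz) q (congrArg Prod.snd hD)
      · have heq := syn_mvK cell eK v (.inr (.inl ck)) z
        rw [diff_grid] at heq
        have hD := shift_eq cell eK hw0 heq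
        rw [hs] at hD
        exact smul_rep_ne_zero (sub_ne_zero.mpr hz) ck.1.1.1 (congrArg Prod.fst hD)
      · have hla : localAdj (v.1 i, v.2 (eK (.inr (.inr i)))) (v.1 i, z) :=
          Or.inr ⟨rfl, hz⟩
        have hd := piDiff_mem hla
        have heq := syn_mvK cell eK v (.inr (.inr i)) z
        rw [diff_comp] at heq
        have hD := shift_eq cell eK hw0 heq
        rw [hs] at hD
        exact smul_rep_ne_zero hd.1 (cell i).1 (congrArg Prod.fst hD)
  · by_cases hs2 : (syn cell eK v).2 = 0
    · -- second component zero, first nonzero : row coordinate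
      have hs1 : (syn cell eK v).1 ≠ 0 := by
        intro h1
        exact hs (Prod.ext_iff.mpr ⟨h1, hs2⟩)
      obtain ⟨p, c, hc, hpc⟩ := line_exists _ hs1
      refine ⟨mvK cell eK v (.inl (.inl p)) (v.2 (eK (.inl (.inl p))) + c), ⟨?_, ?_⟩, ?_⟩
      · rw [syn_mvK, diff_row, add_sub_cancel_left]
        exact cancel2 hpc hs2.symm
      · exact Or.inr ((doob_adj_iff' cell eK v _).mpr (Or.inr
          ⟨.inl (.inl p), _, f2_add_ne_self _ c hc, rfl⟩))
      · rintro w ⟨hw0, hball⟩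
        rcases hball with rfl | hadj
        · exact absurd hw0 hs
        rcases (doob_adj_iff' cell eK v w).mp hadj with ⟨i, s', hmem, rfl⟩ | ⟨κ, z, hz, rfl⟩
        · exfalso
          have hla : localAdj (v.1 i, v.2 (eK (.inr (.inr i)))) (s', v.2 (eK (.inr (.inr i)))) :=
            Or.inl ⟨rfl, hmem⟩
          have hd := piDiff_mem hla
          have heq := syn_mvS cell eK v i s'
          rw [diff_sh] at heq
          have hD := shift_eq cell eK hw0 heq
          exact smul_rep_ne_zero hd.2 (cell i).2 ((congrArg Prod.snd hD).trans hs2)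
        rcases κ with (p' | q') | (ck | i)
        · have heq := syn_mvK cell eK v (.inl (.inl p')) z
          rw [diff_row] at heq
          have hD := shift_eq cell eK hw0 heq
          have h1 := (congrArg Prod.fst hD).trans hpc.symm
          obtain ⟨rfl, hzc⟩ := line_unique (sub_ne_zero.mpr hz) hc h1
          have hzz : z = v.2 (eK (.inl (.inl p'))) + c := by
            rw [← hzc]; abel
          rw [hzz]
        · exfalso
          have heq := syn_mvK cell eK v (.inl (.inr q')) z
          rw [diff_col] at heq
          have hD := shift_eq cell eK hw0 heq
          exact hs1 (congrArg Prod.fst hD).symm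
        · exfalso
          have heq := syn_mvK cell eK v (.inr (.inl ck)) z
          rw [diff_grid] at heq
          have hD := shift_eq cell eK hw0 heq
          have h2 := (congrArg Prod.snd hD).trans hs2
          exact smul_rep_ne_zero (fmul_ne_zero _ _ ⟨sub_ne_zero.mpr hz, ck.2.2⟩) ck.1.1.2 h2
        · exfalso
          have hla : localAdj (v.1 i, v.2 (eK (.inr (.inr i)))) (v.1 i, z) :=
            Or.inr ⟨rfl, hz⟩
          have hd := piDiff_mem hla
          have heq := syn_mvK cell eK v (.inr (.inr i)) z
          rw [diff_comp] at heq
          have hD := shift_eq cell eK hw0 heq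
          exact smul_rep_ne_zero hd.2 (cell i).2 ((congrArg Prod.snd hD).trans hs2)
    · by_cases hs1 : (syn cell eK v).1 = 0
      · -- first component zero, second nonzero : column coordinate
        obtain ⟨q, c, hc, hqc⟩ := line_exists _ hs2
        refine ⟨mvK cell eK v (.inl (.inr q)) (v.2 (eK (.inl (.inr q))) + c), ⟨?_, ?_⟩, ?_⟩
        · rw [syn_mvK, diff_col, add_sub_cancel_left]
          exact cancel2 hs1.symm hqc
        · exact Or.inr ((doob_adj_iff' cell eK v _).mpr (Or.inr
            ⟨.inl (.inr q), _, f2_add_ne_self _ c hc, rfl⟩))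
        · rintro w ⟨hw0, hball⟩
          rcases hball with rfl | hadj
          · exact absurd hw0 hs
          rcases (doob_adj_iff' cell eK v w).mp hadj with ⟨i, s', hmem, rfl⟩ | ⟨κ, z, hz, rfl⟩
          · exfalso
            have hla : localAdj (v.1 i, v.2 (eK (.inr (.inr i)))) (s', v.2 (eK (.inr (.inr i)))) :=
              Or.inl ⟨rfl, hmem⟩
            have hd := piDiff_mem hla
            have heq := syn_mvS cell eK v i s'
            rw [diff_sh] at heq
            have hD := shift_eq cell eK hw0 heq
            exact smul_rep_ne_zero hd.1 (cell i).1 ((congrArg Prod.fst hD).trans hs1)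
          rcases κ with (p' | q') | (ck | i)
          · exfalso
            have heq := syn_mvK cell eK v (.inl (.inl p')) z
            rw [diff_row] at heq
            have hD := shift_eq cell eK hw0 heq
            exact smul_rep_ne_zero (sub_ne_zero.mpr hz) p'
              ((congrArg Prod.fst hD).trans hs1)
          · have heq := syn_mvK cell eK v (.inl (.inr q')) z
            rw [diff_col] at heq
            have hD := shift_eq cell eK hw0 heq
            have h2 := (congrArg Prod.snd hD).trans hqc.symm
            obtain ⟨rfl, hzc⟩ := line_unique (sub_ne_zero.mpr hz) hc h2
            have hzz : z = v.2 (eK (.inl (.inr q'))) + c := by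
              rw [← hzc]; abel
            rw [hzz]
          · exfalso
            have heq := syn_mvK cell eK v (.inr (.inl ck)) z
            rw [diff_grid] at heq
            have hD := shift_eq cell eK hw0 heq
            exact smul_rep_ne_zero (sub_ne_zero.mpr hz) ck.1.1.1
              ((congrArg Prod.fst hD).trans hs1)
          · exfalso
            have hla : localAdj (v.1 i, v.2 (eK (.inr (.inr i)))) (v.1 i, z) :=
              Or.inr ⟨rfl, hz⟩
            have hd := piDiff_mem hla
            have heq := syn_mvK cell eK v (.inr (.inr i)) z
            rw [diff_comp] at heq
            have hD := shift_eq cell eK hw0 heq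
            exact smul_rep_ne_zero hd.1 (cell i).1 ((congrArg Prod.fst hD).trans hs1)
      · -- both components nonzero
        obtain ⟨p, c, hc, hpc⟩ := line_exists _ hs1
        obtain ⟨q, e, he, hqe⟩ := line_exists _ hs2
        by_cases hfree : (p, q) ∈ gridFree cell
        · -- grid coordinate
          obtain ⟨k, hkc⟩ := f2_solve c e hc
          have hkne : k ≠ 0 := f2_ne_zero_of_fmul c k (by rw [hkc]; exact he)
          refine ⟨mvK cell eK v (.inr (.inl ⟨⟨(p, q), hfree⟩, ⟨k, hkne⟩⟩))
            (v.2 (eK (.inr (.inl ⟨⟨(p, q), hfree⟩, ⟨k, hkne⟩⟩))) + c), ⟨?_, ?_⟩, ?_⟩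
          · rw [syn_mvK, diff_grid, add_sub_cancel_left]
            exact cancel2 hpc (by rw [hkc]; exact hqe)
          · exact Or.inr ((doob_adj_iff' cell eK v _).mpr (Or.inr
              ⟨_, _, f2_add_ne_self _ c hc, rfl⟩))
          · rintro w ⟨hw0, hball⟩
            rcases hball with rfl | hadj
            · exact absurd hw0 hs
            rcases (doob_adj_iff' cell eK v w).mp hadj with ⟨i, s', hmem, rfl⟩ | ⟨κ, z, hz, rfl⟩
            · exfalso
              have hla : localAdj (v.1 i, v.2 (eK (.inr (.inr i)))) (s', v.2 (eK (.inr (.inr i)))) :=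
                Or.inl ⟨rfl, hmem⟩
              have hd := piDiff_mem hla
              have heq := syn_mvS cell eK v i s'
              rw [diff_sh] at heq
              have hD := shift_eq cell eK hw0 heq
              obtain ⟨hcp, -⟩ := line_unique hd.1 hc ((congrArg Prod.fst hD).trans hpc.symm)
              obtain ⟨hcq, -⟩ := line_unique hd.2 he ((congrArg Prod.snd hD).trans hqe.symm)
              have : cell i = (p, q) := Prod.ext_iff.mpr ⟨hcp, hcq⟩
              rw [gridFree, Finset.mem_compl] at hfree
              exact hfree (Finset.mem_image.mpr ⟨i, Finset.mem_univ i, this⟩)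
            rcases κ with (p' | q') | (ck | i)
            · exfalso
              have heq := syn_mvK cell eK v (.inl (.inl p')) z
              rw [diff_row] at heq
              have hD := shift_eq cell eK hw0 heq
              exact hs2 (congrArg Prod.snd hD).symm
            · exfalso
              have heq := syn_mvK cell eK v (.inl (.inr q')) z
              rw [diff_col] at heq
              have hD := shift_eq cell eK hw0 heq
              exact hs1 (congrArg Prod.fst hD).symm
            · have heq := syn_mvK cell eK v (.inr (.inl ck)) z
              rw [diff_grid] at heq
              have hD := shift_eq cell eK hw0 heq
              obtain ⟨hcp, hzc⟩ := line_unique (sub_ne_zero.mpr hz) hc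
                ((congrArg Prod.fst hD).trans hpc.symm)
              have hkk : fmul (z - v.2 (eK (.inr (.inl ck)))) ck.2.1 ≠ 0 :=
                fmul_ne_zero _ _ ⟨sub_ne_zero.mpr hz, ck.2.2⟩
              obtain ⟨hcq, hzk⟩ := line_unique hkk he
                ((congrArg Prod.snd hD).trans hqe.symm)
              rw [hzc] at hzk
              have hkeq : ck.2.1 = k := fmul_cancel c _ _ ⟨hc, hzk.trans hkc.symm⟩
              have hckeq : ck = ⟨⟨(p, q), hfree⟩, ⟨k, hkne⟩⟩ :=
                Prod.ext_iff.mpr ⟨Subtype.ext (Prod.ext_iff.mpr ⟨hcp, hcq⟩), Subtype.ext hkeq⟩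
              rw [hckeq] at hzc
              rw [hckeq]
              have hzz : z = v.2 (eK (.inr (.inl ⟨⟨(p, q), hfree⟩, ⟨k, hkne⟩⟩))) + c := by
                rw [← hzc]; abel
              rw [hzz]
            · exfalso
              have hla : localAdj (v.1 i, v.2 (eK (.inr (.inr i)))) (v.1 i, z) :=
                Or.inr ⟨rfl, hz⟩
              have hd := piDiff_mem hla
              have heq := syn_mvK cell eK v (.inr (.inr i)) z
              rw [diff_comp] at heq
              have hD := shift_eq cell eK hw0 heq
              obtain ⟨hcp, -⟩ := line_unique hd.1 hc ((congrArg Prod.fst hD).trans hpc.symm)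
              obtain ⟨hcq, -⟩ := line_unique hd.2 he ((congrArg Prod.snd hD).trans hqe.symm)
              have : cell i = (p, q) := Prod.ext_iff.mpr ⟨hcp, hcq⟩
              rw [gridFree, Finset.mem_compl] at hfree
              exact hfree (Finset.mem_image.mpr ⟨i, Finset.mem_univ i, this⟩)
        · -- Shrikhande cell
          have hmemim : (p, q) ∈ Finset.image cell Finset.univ := by
            rw [gridFree, Finset.mem_compl, not_not] at hfree
            exact hfree
          obtain ⟨i0, -, hi0⟩ := Finset.mem_image.mp hmemim
          obtain ⟨w', ⟨hwadj, hwd⟩, hwuniq⟩ :=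
            pi_exists_unique (v.1 i0, v.2 (eK (.inr (.inr i0)))) (c, e) hc he
          -- uniqueness argument shared between the two shapes of w'
          have huniq : ∀ w : Vtx m n, (syn cell eK w = 0 ∧
              (v = w ∨ (DoobGraphZ2 m n).Adj v w)) →
              (w = mvS v i0 w'.1 ∧ w'.2 = v.2 (eK (.inr (.inr i0)))) ∨
              (w = mvK cell eK v (.inr (.inr i0)) w'.2 ∧ w'.1 = v.1 i0) := by
            rintro w ⟨hw0, hball⟩
            rcases hball with rfl | hadj
            · exact absurd hw0 hs
            rcases (doob_adj_iff' cell eK v w).mp hadj with ⟨i, s', hmem, rfl⟩ | ⟨κ, z, hz, rfl⟩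
            · have hla : localAdj (v.1 i, v.2 (eK (.inr (.inr i)))) (s', v.2 (eK (.inr (.inr i)))) :=
                Or.inl ⟨rfl, hmem⟩
              have hd := piDiff_mem hla
              have heq := syn_mvS cell eK v i s'
              rw [diff_sh] at heq
              have hD := shift_eq cell eK hw0 heq
              obtain ⟨hcp, hd1⟩ := line_unique hd.1 hc ((congrArg Prod.fst hD).trans hpc.symm)
              obtain ⟨hcq, hd2⟩ := line_unique hd.2 he ((congrArg Prod.snd hD).trans hqe.symm)
              have hii : i = i0 := hcell (by
                rw [hi0]; exact Prod.ext_iff.mpr ⟨hcp, hcq⟩)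
              subst hii
              have hweq : (s', v.2 (eK (.inr (.inr i)))) = w' := by
                apply hwuniq
                refine ⟨hla, ?_⟩
                exact Prod.ext_iff.mpr ⟨hd1, hd2⟩
              refine Or.inl ⟨?_, ?_⟩
              · rw [← hweq]
              · rw [← hweq]
            · rcases κ with (p' | q') | (ck | i)
              · exfalso
                have heq := syn_mvK cell eK v (.inl (.inl p')) z
                rw [diff_row] at heq
                have hD := shift_eq cell eK hw0 heq
                exact hs2 (congrArg Prod.snd hD).symm
              · exfalso
                have heq := syn_mvK cell eK v (.inl (.inr q')) z
                rw [diff_col] at heq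
                have hD := shift_eq cell eK hw0 heq
                exact hs1 (congrArg Prod.fst hD).symm
              · exfalso
                have heq := syn_mvK cell eK v (.inr (.inl ck)) z
                rw [diff_grid] at heq
                have hD := shift_eq cell eK hw0 heq
                obtain ⟨hcp, -⟩ := line_unique (sub_ne_zero.mpr hz) hc
                  ((congrArg Prod.fst hD).trans hpc.symm)
                have hkk : fmul (z - v.2 (eK (.inr (.inl ck)))) ck.2.1 ≠ 0 :=
                  fmul_ne_zero _ _ ⟨sub_ne_zero.mpr hz, ck.2.2⟩
                obtain ⟨hcq, -⟩ := line_unique hkk he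
                  ((congrArg Prod.snd hD).trans hqe.symm)
                have hckpq : ck.1.1 = (p, q) := Prod.ext_iff.mpr ⟨hcp, hcq⟩
                exact hfree (hckpq ▸ ck.1.2)
              · have hla : localAdj (v.1 i, v.2 (eK (.inr (.inr i)))) (v.1 i, z) :=
                  Or.inr ⟨rfl, hz⟩
                have hd := piDiff_mem hla
                have heq := syn_mvK cell eK v (.inr (.inr i)) z
                rw [diff_comp] at heq
                have hD := shift_eq cell eK hw0 heq
                obtain ⟨hcp, hd1⟩ := line_unique hd.1 hc ((congrArg Prod.fst hD).trans hpc.symm)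
                obtain ⟨hcq, hd2⟩ := line_unique hd.2 he ((congrArg Prod.snd hD).trans hqe.symm)
                have hii : i = i0 := hcell (by
                  rw [hi0]; exact Prod.ext_iff.mpr ⟨hcp, hcq⟩)
                subst hii
                have hweq : (v.1 i, z) = w' := by
                  apply hwuniq
                  exact ⟨hla, Prod.ext_iff.mpr ⟨hd1, hd2⟩⟩
                refine Or.inr ⟨?_, ?_⟩
                · rw [← hweq]
                · rw [← hweq]
          rcases hwadj with hA | hB
          · -- w' is a Shrikhande move
            refine ⟨mvS v i0 w'.1, ⟨?_, ?_⟩, ?_⟩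
            · rw [syn_mvS, diff_sh]
              have hw'eq : (w'.1, v.2 (eK (.inr (.inr i0)))) = w' :=
                Prod.ext_iff.mpr ⟨rfl, hA.1.symm⟩
              rw [hw'eq, hwd, hi0]
              exact cancel2 hpc hqe
            · exact Or.inr ((doob_adj_iff' cell eK v _).mpr (Or.inl ⟨i0, w'.1, hA.2, rfl⟩))
            · intro w hw
              rcases huniq w hw with ⟨hweq, -⟩ | ⟨hweq, hweq2⟩
              · exact hweq
              · exact absurd (by simpa [hweq2] using hA.2) zero_not_mem_sshF
          · -- w' is a companion K4 move
            refine ⟨mvK cell eK v (.inr (.inr i0)) w'.2, ⟨?_, ?_⟩, ?_⟩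
            · rw [syn_mvK, diff_comp]
              have hw'eq : (v.1 i0, w'.2) = w' :=
                Prod.ext_iff.mpr ⟨hB.1.symm, rfl⟩
              rw [hw'eq, hwd, hi0]
              exact cancel2 hpc hqe
            · exact Or.inr ((doob_adj_iff' cell eK v _).mpr (Or.inr
                ⟨.inr (.inr i0), w'.2, hB.2, rfl⟩))
            · intro w hw
              rcases huniq w hw with ⟨hweq, hweq2⟩ | ⟨hweq, -⟩
              · exfalso
                exact hB.2 hweq2
              · exact hweq

end Main

end PCaux

open PCaux

theorem exists_perfect_code_small_m (m n μ : ℕ) (hm : 0 < m) (hn : 0 < n) (hμ : 0 < μ)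
    (hmn : 3 * (2 * m + n) + 1 = 4 ^ μ)
    (hodd : Odd μ → 9 * m + 5 * 2 ^ (μ - 1) ≤ 4 ^ μ + 1)
    (heven : Even μ → 9 * m + 2 ^ (μ + 1) ≤ 4 ^ μ + 1) :
    ∃ C : Set (DoobVtx2 m n), IsPerfectCode (DoobGraphZ2 m n) C := by
  classical
  have hμ2 : 2 ≤ μ := by
    by_contra h
    have hμ1 : μ = 1 := by omega
    subst hμ1
    norm_num at hmn
    omega
  set q := μ / 2 with hq
  set r := μ - μ / 2 with hr
  have hqr : q + r = μ := by omega
  set N1 := Fintype.card (ProjPt q) with hN1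
  set N2 := Fintype.card (ProjPt r) with hN2
  have e1 : 3 * N1 + 1 = 4 ^ q := card_projPt q
  have e2 : 3 * N2 + 1 = 4 ^ r := card_projPt r
  have hprod : (3 * N1 + 1) * (3 * N2 + 1) = 4 ^ μ := by
    rw [e1, e2, ← pow_add, hqr]
  have hexp : 9 * (N1 * N2) + 3 * N1 + 3 * N2 + 1 = 4 ^ μ := by
    rw [← hprod]; ring
  have hmle : m ≤ N1 * N2 := by
    rcases Nat.even_or_odd μ with hev | hod
    · have hev' : μ % 2 = 0 := Nat.even_iff.mp hev
      have h4a : (4 : ℕ) ^ q = 2 ^ μ := by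
        rw [show (4 : ℕ) = 2 ^ 2 by norm_num, ← pow_mul]
        congr 1; omega
      have h4b : (4 : ℕ) ^ r = 2 ^ μ := by
        rw [show (4 : ℕ) = 2 ^ 2 by norm_num, ← pow_mul]
        congr 1; omega
      have hb1 := heven hev
      have hps : (2 : ℕ) ^ (μ + 1) = 2 ^ μ + 2 ^ μ := by
        rw [pow_succ]; ring
      omega
    · have hod' : μ % 2 = 1 := Nat.odd_iff.mp hod
      have h4a : (4 : ℕ) ^ q = 2 ^ (μ - 1) := by
        rw [show (4 : ℕ) = 2 ^ 2 by norm_num, ← pow_mul]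
        congr 1; omega
      have h4b : (4 : ℕ) ^ r = 4 * 4 ^ q := by
        rw [show r = q + 1 by omega, pow_succ]; ring
      have hb1 := hodd hod
      omega
  have hneq : 2 * m + n = 3 * (N1 * N2) + N1 + N2 := by omega
  have hcard : Fintype.card (Fin m) ≤ Fintype.card (ProjPt q × ProjPt r) := by
    rw [Fintype.card_fin, Fintype.card_prod]
    exact hmle
  obtain ⟨emb⟩ := Function.Embedding.nonempty_of_card_le hcard
  set cell : Fin m → ProjPt q × ProjPt r := ⇑emb with hcelldef
  have hcell : Function.Injective cell := emb.injective
  have himg : (Finset.image cell Finset.univ).card = m := by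
    rw [Finset.card_image_of_injective _ hcell, Finset.card_univ, Fintype.card_fin]
  have hfreecard : (gridFree cell).card = N1 * N2 - m := by
    rw [gridFree, Finset.card_compl, himg, Fintype.card_prod]
  have hk3 : Fintype.card {k : F2 // k ≠ 0} = 3 := by decide
  have hKn : Fintype.card (KnT cell) = n := by
    rw [show Fintype.card (KnT cell) =
        Fintype.card (ProjPt q ⊕ ProjPt r) +
        Fintype.card (({c : ProjPt q × ProjPt r // c ∈ gridFree cell} ×
          {k : F2 // k ≠ 0}) ⊕ Fin m) from Fintype.card_sum,
      Fintype.card_sum, Fintype.card_sum, Fintype.card_prod, Fintype.card_coe,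
      Fintype.card_fin, hk3, hfreecard, ← hN1, ← hN2]
    omega
  set eK : KnT cell ≃ Fin n := Fintype.equivFinOfCardEq hKn with heK
  refine ⟨{w : DoobVtx2 m n | syn cell eK w = 0}, ?_⟩
  intro v
  exact main_code cell eK hcell v
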